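/- Let f : ℝⁿ → ℝ be differentiable with L-Lipschitz gradient, let x ∈ ℝⁿ and Δ > 0, and suppose that for every d ∈ G the inequality f(x) ≤ f(x + Δd) + Δ² holds. Then ‖[−∇f(x)]_{K°}‖ ≤ √n · (L + 1) · Δ. -/

import Mathlib

open InnerProductSpace RealInnerProductSpace

/-- If no generator of K° attains sufficient decrease, then
  ‖[−∇f(x)]_{K°}‖ ≤ √n · (L + 1) · Δ. -/
theorem stmt_10 (n : ℕ) (hn : 1 ≤ n)
    (Ip Im : Set (Fin n)) (hdisj : Disjoint Ip Im)
    (Kpolar : Set (EuclideanSpace ℝ (Fin n)))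
    (hKpolar : Kpolar = {w | (∀ i ∈ Ip, w i ≤ 0) ∧ (∀ i ∈ Im, 0 ≤ w i)})
    (G : Set (EuclideanSpace ℝ (Fin n)))
    (hG : G = {d | (∃ i ∈ Ip, d = -(EuclideanSpace.single i (1 : ℝ)))
        ∨ (∃ i ∈ Im, d = EuclideanSpace.single i (1 : ℝ))
        ∨ (∃ i, i ∉ Ip ∧ i ∉ Im ∧
            (d = EuclideanSpace.single i (1 : ℝ) ∨ d = -(EuclideanSpace.single i (1 : ℝ))))})
    (f : EuclideanSpace ℝ (Fin n) → ℝ)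
    (hdiff : Differentiable ℝ f)
    (L : ℝ)
    (hLip : ∀ y z : EuclideanSpace ℝ (Fin n),
      ‖gradient f y - gradient f z‖ ≤ L * ‖y - z‖)
    (x : EuclideanSpace ℝ (Fin n)) (Δ : ℝ) (hΔ : 0 < Δ)
    (hfail : ∀ d ∈ G, f x ≤ f (x + Δ • d) + Δ ^ 2)
    (p : EuclideanSpace ℝ (Fin n))
    (hpmem : p ∈ Kpolar)
    (hpproj : ∀ q ∈ Kpolar, ‖-gradient f x - p‖ ≤ ‖-gradient f x - q‖) :
    ‖p‖ ≤ Real.sqrt n * (L + 1) * Δ := by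
  set v : EuclideanSpace ℝ (Fin n) := -gradient f x with hv
  -- L is nonnegative
  have hL0 : 0 ≤ L := by
    have h := hLip (EuclideanSpace.single (⟨0, hn⟩ : Fin n) (1 : ℝ)) 0
    rw [sub_zero] at h
    simp only [EuclideanSpace.norm_single, norm_one, mul_one] at h
    exact le_trans (norm_nonneg _) h
  set c : ℝ := (L + 1) * Δ with hc
  have hc0 : 0 ≤ c := mul_nonneg (by linarith) hΔ.le
  have hrhs0 : 0 ≤ Real.sqrt n * (L + 1) * Δ :=
    mul_nonneg (mul_nonneg (Real.sqrt_nonneg _) (by linarith)) hΔ.le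
  -- key: for each unit generator d, ⟪v, d⟫ ≤ c
  have hfdual : ∀ z, fderiv ℝ f z = toDual ℝ _ (gradient f z) := fun z => by simp [gradient]
  have hkey : ∀ d ∈ G, ‖d‖ = 1 → ⟪v, d⟫_ℝ ≤ c := by
    intro d hd hnd
    set y := x + Δ • d with hy
    have hyx : y - x = Δ • d := by simp [hy]
    have hnyx : ‖y - x‖ = Δ := by
      rw [hyx, norm_smul, hnd, mul_one, Real.norm_eq_abs, abs_of_pos hΔ]
    have hbound : ∀ z ∈ Metric.closedBall x Δ, ‖fderiv ℝ f z - fderiv ℝ f x‖ ≤ L * Δ := by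
      intro z hz
      rw [hfdual z, hfdual x, ← map_sub, LinearIsometryEquiv.norm_map]
      calc ‖gradient f z - gradient f x‖ ≤ L * ‖z - x‖ := hLip z x
        _ ≤ L * Δ := by
          have hz' : ‖z - x‖ ≤ Δ := by
            rw [← dist_eq_norm]; exact Metric.mem_closedBall.mp hz
          exact mul_le_mul_of_nonneg_left hz' hL0
    have hymem : y ∈ Metric.closedBall x Δ := by
      rw [Metric.mem_closedBall, dist_eq_norm, hnyx]
    have hmvt := (convex_closedBall x Δ).norm_image_sub_le_of_norm_fderiv_le'
      (fun z _ => hdiff z) hbound (Metric.mem_closedBall_self hΔ.le) hymem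
    rw [hnyx] at hmvt
    have hφ : (fderiv ℝ f x) (y - x) = Δ * ⟪gradient f x, d⟫_ℝ := by
      rw [hfdual x, hyx, map_smul, smul_eq_mul, toDual_apply_apply]
    rw [hφ, Real.norm_eq_abs] at hmvt
    have habs := abs_le.mp hmvt
    have hfl := hfail d hd
    rw [← hy] at hfl
    have hAle : Δ * (-⟪gradient f x, d⟫_ℝ) ≤ Δ * c := by
      rw [hc]; nlinarith [habs.1, hfl]
    have := le_of_mul_le_mul_left hAle hΔ
    rwa [hv, inner_neg_left]
  -- coordinatewise bound : v i * p i ≤ c * |p i|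
  have hpm := hKpolar ▸ hpmem
  obtain ⟨hp1, hp2⟩ := hpm
  have hub : ∀ i, v i * p i ≤ c * |p i| := by
    intro i
    by_cases hip : i ∈ Ip
    · have hpi : p i ≤ 0 := hp1 i hip
      have hdG : (-(EuclideanSpace.single i (1 : ℝ))) ∈ G := by
        rw [hG]; exact Or.inl ⟨i, hip, rfl⟩
      have hvi : -(v i) ≤ c := by
        have h := hkey _ hdG (by simp)
        simpa [EuclideanSpace.inner_single_right] using h
      calc v i * p i = (-(v i)) * (-(p i)) := by ring
        _ ≤ c * (-(p i)) := mul_le_mul_of_nonneg_right hvi (by linarith)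
        _ = c * |p i| := by rw [abs_of_nonpos hpi]
    · by_cases him : i ∈ Im
      · have hpi : 0 ≤ p i := hp2 i him
        have hdG : (EuclideanSpace.single i (1 : ℝ)) ∈ G := by
          rw [hG]; exact Or.inr (Or.inl ⟨i, him, rfl⟩)
        have hvi : v i ≤ c := by
          have h := hkey _ hdG (by simp)
          simpa [EuclideanSpace.inner_single_right] using h
        calc v i * p i ≤ c * p i := mul_le_mul_of_nonneg_right hvi hpi
          _ = c * |p i| := by rw [abs_of_nonneg hpi]
      · have hdG1 : (EuclideanSpace.single i (1 : ℝ)) ∈ G := by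
          rw [hG]; exact Or.inr (Or.inr ⟨i, hip, him, Or.inl rfl⟩)
        have hdG2 : (-(EuclideanSpace.single i (1 : ℝ))) ∈ G := by
          rw [hG]; exact Or.inr (Or.inr ⟨i, hip, him, Or.inr rfl⟩)
        have hvi1 : v i ≤ c := by
          have h := hkey _ hdG1 (by simp)
          simpa [EuclideanSpace.inner_single_right] using h
        have hvi2 : -(v i) ≤ c := by
          have h := hkey _ hdG2 (by simp)
          simpa [EuclideanSpace.inner_single_right] using h
        have hviabs : |v i| ≤ c := abs_le.mpr ⟨by linarith, hvi1⟩
        calc v i * p i ≤ |v i * p i| := le_abs_self _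
          _ = |v i| * |p i| := abs_mul _ _
          _ ≤ c * |p i| := mul_le_mul_of_nonneg_right hviabs (abs_nonneg _)
  -- ⟪v, p⟫ ≤ c * √n * ‖p‖
  have hsum : ⟪v, p⟫_ℝ ≤ c * ∑ i, |p i| := by
    have h1 : ⟪v, p⟫_ℝ = ∑ i, v i * p i := by simp [PiLp.inner_apply, mul_comm]
    rw [h1, Finset.mul_sum]
    exact Finset.sum_le_sum fun i _ => hub i
  have hl1 : ∑ i, |p i| ≤ Real.sqrt n * ‖p‖ := by
    have h2 : (∑ i, |p i|) ^ 2 ≤ (n : ℝ) * ∑ i, |p i| ^ 2 := by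
      simpa using sq_sum_le_card_mul_sum_sq (s := Finset.univ) (f := fun i => |p i|)
    have h3 : ‖p‖ ^ 2 = ∑ i, |p i| ^ 2 := by
      rw [EuclideanSpace.norm_eq, Real.sq_sqrt (by positivity)]
      simp [Real.norm_eq_abs]
    have h4 : (∑ i, |p i|) ^ 2 ≤ (Real.sqrt n * ‖p‖) ^ 2 := by
      rw [mul_pow, Real.sq_sqrt (Nat.cast_nonneg n), h3]; exact h2
    have h5 : 0 ≤ ∑ i, |p i| := Finset.sum_nonneg fun i _ => abs_nonneg _
    exact le_of_pow_le_pow_left₀ two_ne_zero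
      (mul_nonneg (Real.sqrt_nonneg _) (norm_nonneg _)) h4
  -- handle p = 0
  rcases eq_or_ne p 0 with rfl | hp0
  · simpa using hrhs0
  have hpn : 0 < ‖p‖ := norm_pos_iff.mpr hp0
  -- variational inequality at 0 gives ‖p‖² ≤ ⟪v, p⟫
  have hA : 0 ≤ ⟪v - p, p⟫_ℝ := by
    by_contra hAneg
    push_neg at hAneg
    set A := ⟪v - p, p⟫_ℝ with hAdef
    set t : ℝ := min 1 (-A / ‖p‖ ^ 2) with ht
    have hpn2 : (0:ℝ) < ‖p‖ ^ 2 := by positivity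
    have ht0 : 0 < t := lt_min one_pos (div_pos (neg_pos.mpr hAneg) hpn2)
    have hmem : (1 - t) • p ∈ Kpolar := by
      rw [hKpolar]
      have h1t : 0 ≤ 1 - t := by
        have := min_le_left 1 (-A / ‖p‖ ^ 2); simp only [← ht] at this; linarith
      refine ⟨fun i hi => ?_, fun i hi => ?_⟩
      · have h := hp1 i hi
        have he : ((1 - t) • p) i = (1 - t) * p i := rfl
        rw [he]; exact mul_nonpos_of_nonneg_of_nonpos h1t h
      · have h := hp2 i hi
        have he : ((1 - t) • p) i = (1 - t) * p i := rfl
        rw [he]; exact mul_nonneg h1t h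
    have hle := hpproj _ hmem
    have hsplit : v - (1 - t) • p = (v - p) + t • p := by
      rw [sub_smul, one_smul]; abel
    have hexp : ‖v - (1 - t) • p‖ ^ 2
        = ‖v - p‖ ^ 2 + 2 * t * A + t ^ 2 * ‖p‖ ^ 2 := by
      rw [hsplit, norm_add_sq_real, real_inner_smul_right, norm_smul,
        Real.norm_eq_abs, mul_pow, sq_abs, ← hAdef]
      ring
    have hsq : ‖v - p‖ ^ 2 ≤ ‖v - (1 - t) • p‖ ^ 2 :=
      pow_le_pow_left₀ (norm_nonneg _) hle 2
    have h6 : 0 ≤ 2 * t * A + t ^ 2 * ‖p‖ ^ 2 := by rw [hexp] at hsq; linarith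
    have h7 : 0 ≤ 2 * A + t * ‖p‖ ^ 2 := by nlinarith [h6, ht0]
    have h8 : t * ‖p‖ ^ 2 ≤ -A := by
      have := min_le_right 1 (-A / ‖p‖ ^ 2)
      calc t * ‖p‖ ^ 2 ≤ (-A / ‖p‖ ^ 2) * ‖p‖ ^ 2 :=
            mul_le_mul_of_nonneg_right (by rw [ht]; exact this) hpn2.le
        _ = -A := div_mul_cancel₀ _ hpn2.ne'
    linarith
  have hvar : ‖p‖ ^ 2 ≤ ⟪v, p⟫_ℝ := by
    rw [inner_sub_left] at hA
    have := real_inner_self_eq_norm_sq p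
    linarith
  -- combine
  have hfin : ‖p‖ * ‖p‖ ≤ (Real.sqrt n * (L + 1) * Δ) * ‖p‖ := by
    have h9 : ⟪v, p⟫_ℝ ≤ c * (Real.sqrt n * ‖p‖) :=
      hsum.trans (mul_le_mul_of_nonneg_left hl1 hc0)
    have h10 : c * (Real.sqrt n * ‖p‖) = (Real.sqrt n * (L + 1) * Δ) * ‖p‖ := by
      rw [hc]; ring
    calc ‖p‖ * ‖p‖ = ‖p‖ ^ 2 := (sq ‖p‖).symm
      _ ≤ ⟪v, p⟫_ℝ := hvar
      _ ≤ (Real.sqrt n * (L + 1) * Δ) * ‖p‖ := by rw [← h10]; exact h9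
  exact le_of_mul_le_mul_right hfin hpn
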